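/- For any finite graph G = (V,E) (possibly with parallel edges, no loops), the set of degree sequences {d_F ∈ ℤ^V : F ⊆ E}, where d_F(v) is the number of edges of F incident to v, is a constant-parity jump system. -/
import Mathlib


/-- `s` is an `(x,y)`-increment: a signed unit vector moving `x` towards `y`. -/
def IsIncrement {V : Type*} [DecidableEq V] (x y s : V → ℤ) : Prop :=
  ∃ u : V, (s = Pi.single u 1 ∧ x u < y u) ∨ (s = -Pi.single u 1 ∧ y u < x u)

/-- `J` is a jump system. -/
def IsJumpSystem {V : Type*} [DecidableEq V] (J : Set (V → ℤ)) : Prop :=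
  J.Nonempty ∧ ∀ x ∈ J, ∀ y ∈ J, ∀ s, IsIncrement x y s → x + s ∉ J →
    ∃ r, IsIncrement (x + s) y r ∧ x + s + r ∈ J

/-- `J` has the constant-parity property. -/
def HasConstantParity {V : Type*} [Fintype V] (J : Set (V → ℤ)) : Prop :=
  ∀ x ∈ J, ∀ y ∈ J, Even (∑ v, x v - ∑ v, y v)

section Aux
variable {V E : Type*} [DecidableEq V] [Fintype V] [DecidableEq E] [Fintype E]

/-- degree sequence of an edge subset -/
def jsDeg (ends : E → Sym2 V) (F : Finset E) : V → ℤ :=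
  fun v => ((F.filter fun e => v ∈ ends e).card : ℤ)

lemma jsDeg_insert (ends : E → Sym2 V) {F : Finset E} {e : E} (he : e ∉ F) {a b : V}
    (hab : ends e = s(a, b)) (hne : a ≠ b) :
    jsDeg ends (insert e F) = jsDeg ends F + Pi.single a 1 + Pi.single b 1 := by
  funext v
  simp only [jsDeg, Pi.add_apply, Finset.filter_insert]
  by_cases hv : v ∈ ends e
  · rw [if_pos hv,
      Finset.card_insert_of_notMem (fun h => he (Finset.mem_of_mem_filter _ h))]
    rw [hab, Sym2.mem_iff] at hv
    push_cast
    rcases hv with rfl | rfl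
    · rw [Pi.single_eq_same, Pi.single_eq_of_ne hne]; ring
    · rw [Pi.single_eq_same, Pi.single_eq_of_ne hne.symm]; ring
  · rw [if_neg hv]
    rw [hab, Sym2.mem_iff] at hv
    push_neg at hv
    rw [Pi.single_eq_of_ne hv.1, Pi.single_eq_of_ne hv.2]; ring

lemma jsDeg_erase (ends : E → Sym2 V) {F : Finset E} {f : E} (hf : f ∈ F) {a b : V}
    (hab : ends f = s(a, b)) (hne : a ≠ b) :
    jsDeg ends (F.erase f) = jsDeg ends F - Pi.single a 1 - Pi.single b 1 := by
  have h1 : jsDeg ends (insert f (F.erase f)) =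
      jsDeg ends (F.erase f) + Pi.single a 1 + Pi.single b 1 :=
    jsDeg_insert ends (Finset.notMem_erase f F) hab hne
  rw [Finset.insert_erase hf] at h1
  rw [h1]; abel

lemma jsExists_edge (ends : E → Sym2 V) {F G : Finset E} {u : V}
    (h : jsDeg ends F u < jsDeg ends G u) : ∃ e, e ∈ G ∧ e ∉ F ∧ u ∈ ends e := by
  by_contra hc
  push_neg at hc
  have hsub : (G.filter fun e => u ∈ ends e) ⊆ F.filter fun e => u ∈ ends e := by
    intro e he
    rw [Finset.mem_filter] at he ⊢
    refine ⟨?_, he.2⟩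
    by_contra heF
    exact hc e he.1 heF he.2
  have := Finset.card_le_card hsub
  simp only [jsDeg] at h
  omega

lemma jsExists_edge2 (ends : E → Sym2 V) {F G : Finset E} {w : V} {e : E}
    (heG : e ∈ G) (heF : e ∉ F) (hew : w ∈ ends e)
    (h : jsDeg ends G w ≤ jsDeg ends F w) : ∃ f, f ∈ F ∧ f ∉ G ∧ w ∈ ends f := by
  by_contra hc
  push_neg at hc
  have hsub : (F.filter fun e => w ∈ ends e) ⊂ G.filter fun e => w ∈ ends e := by
    constructor
    · intro f hf
      rw [Finset.mem_filter] at hf ⊢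
      refine ⟨?_, hf.2⟩
      by_contra hfG
      exact hc f hf.1 hfG hf.2
    · intro hsub'
      have : e ∈ F.filter fun e => w ∈ ends e := hsub' (Finset.mem_filter.2 ⟨heG, hew⟩)
      exact heF (Finset.mem_of_mem_filter _ this)
  have := Finset.card_lt_card hsub
  simp only [jsDeg] at h
  omega

end Aux

section Main
variable {V E : Type*} [DecidableEq V] [Fintype V] [DecidableEq E] [Fintype E]

set_option linter.unusedSectionVars false

/-- Exchange lemma, positive direction: if `deg F u < deg G u`, then from `deg F + χ_u`
one more increment step reaches a degree sequence. Induction on `|G \ F|`. -/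
lemma jsLemA (ends : E → Sym2 V) (hloop : ∀ e, ¬ (ends e).IsDiag) :
    ∀ (n : ℕ) (F G : Finset E), (G \ F).card = n → ∀ u : V,
      jsDeg ends F u < jsDeg ends G u →
      ∃ t, IsIncrement (jsDeg ends F + Pi.single u 1) (jsDeg ends G) t ∧
        ∃ F' : Finset E, jsDeg ends F' = jsDeg ends F + Pi.single u 1 + t := by
  intro n
  induction n using Nat.strong_induction_on with
  | _ n ih =>
    intro F G hcard u hu
    obtain ⟨e, heG, heF, heu⟩ := jsExists_edge ends hu
    obtain ⟨w, hew⟩ := Sym2.mem_iff_exists.1 heu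
    have huw : u ≠ w := by
      intro h; exact hloop e (by rw [hew, ← h]; exact Sym2.mk_isDiag_iff.2 rfl)
    have hdegins : jsDeg ends (insert e F) =
        jsDeg ends F + Pi.single u 1 + Pi.single w 1 := jsDeg_insert ends heF hew huw
    by_cases h1 : jsDeg ends F w < jsDeg ends G w
    · refine ⟨Pi.single w 1, ⟨w, Or.inl ⟨rfl, ?_⟩⟩, insert e F, hdegins⟩
      simpa [Pi.single_eq_of_ne huw.symm] using h1
    · push_neg at h1
      have hew2 : w ∈ ends e := by rw [hew]; exact Sym2.mem_mk_right u w
      obtain ⟨f, hfF, hfG, hfw⟩ := jsExists_edge2 ends heG heF hew2 h1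
      obtain ⟨z, hfz⟩ := Sym2.mem_iff_exists.1 hfw
      have hwz : w ≠ z := by
        intro h; exact hloop f (by rw [hfz, ← h]; exact Sym2.mk_isDiag_iff.2 rfl)
      have hfe : f ≠ e := fun h => hfG (h ▸ heG)
      have hfins : f ∈ insert e F := Finset.mem_insert_of_mem hfF
      have hdegF' : jsDeg ends ((insert e F).erase f) =
          jsDeg ends F + Pi.single u 1 - Pi.single z 1 := by
        rw [jsDeg_erase ends hfins hfz hwz, hdegins]; abel
      by_cases h2 : z ≠ u ∧ jsDeg ends G z < jsDeg ends F z
      · refine ⟨-Pi.single z 1, ⟨z, Or.inr ⟨rfl, ?_⟩⟩, (insert e F).erase f, ?_⟩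
        · simpa [Pi.single_eq_of_ne h2.1] using h2.2
        · rw [hdegF']; abel
      · -- recurse with F' := (insert e F).erase f at vertex z
        set F' := (insert e F).erase f with hF'def
        have hGF' : G \ F' = (G \ F).erase e := by
          ext x
          simp only [hF'def, Finset.mem_sdiff, Finset.mem_erase, Finset.mem_insert]
          constructor
          · rintro ⟨hxG, hx⟩
            push_neg at hx
            have hxf : x ≠ f := fun h => hfG (h ▸ hxG)
            obtain ⟨hxe, hxF⟩ := hx hxf
            exact ⟨hxe, hxG, hxF⟩
          · rintro ⟨hxe, hxG, hxF⟩
            exact ⟨hxG, by push_neg; intro _; exact ⟨hxe, hxF⟩⟩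
        have hlt : (G \ F').card < n := by
          rw [hGF']
          calc ((G \ F).erase e).card < (G \ F).card :=
                Finset.card_erase_lt_of_mem (Finset.mem_sdiff.2 ⟨heG, heF⟩)
            _ = n := hcard
        have hz : jsDeg ends F' z < jsDeg ends G z := by
          have := congrFun hdegF' z
          simp only [Pi.add_apply, Pi.sub_apply, Pi.single_eq_same] at this
          rw [this]
          by_cases hzu : z = u
          · subst hzu; simp only [Pi.single_eq_same]; omega
          · have : ¬(z ≠ u ∧ jsDeg ends G z < jsDeg ends F z) := h2
            push_neg at this
            have hle := this hzu
            rw [Pi.single_eq_of_ne hzu]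
            omega
        obtain ⟨t, ht, F'', hF''⟩ := ih _ hlt F' G rfl z hz
        have hkey : jsDeg ends F' + Pi.single z 1 = jsDeg ends F + Pi.single u 1 := by
          rw [hdegF']; abel
        rw [hkey] at ht hF''
        exact ⟨t, ht, F'', hF''⟩

/-- Exchange lemma, negative direction. -/
lemma jsLemB (ends : E → Sym2 V) (hloop : ∀ e, ¬ (ends e).IsDiag) :
    ∀ (n : ℕ) (F G : Finset E), (G \ F).card = n → ∀ u : V,
      jsDeg ends G u < jsDeg ends F u →
      ∃ t, IsIncrement (jsDeg ends F + -Pi.single u 1) (jsDeg ends G) t ∧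
        ∃ F' : Finset E, jsDeg ends F' = jsDeg ends F + -Pi.single u 1 + t := by
  intro n
  induction n using Nat.strong_induction_on with
  | _ n ih =>
    intro F G hcard u hu
    obtain ⟨e, heF, heG, heu⟩ := jsExists_edge ends hu
    obtain ⟨w, hew⟩ := Sym2.mem_iff_exists.1 heu
    have huw : u ≠ w := by
      intro h; exact hloop e (by rw [hew, ← h]; exact Sym2.mk_isDiag_iff.2 rfl)
    have hew2 : w ∈ ends e := by rw [hew]; exact Sym2.mem_mk_right u w
    have hdegera : jsDeg ends (F.erase e) =
        jsDeg ends F - Pi.single u 1 - Pi.single w 1 := jsDeg_erase ends heF hew huw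
    by_cases h1 : jsDeg ends G w < jsDeg ends F w
    · refine ⟨-Pi.single w 1, ⟨w, Or.inr ⟨rfl, ?_⟩⟩, F.erase e, ?_⟩
      · simpa [Pi.single_eq_of_ne huw.symm] using h1
      · rw [hdegera]; abel
    · push_neg at h1
      obtain ⟨f, hfG, hfF, hfw⟩ := jsExists_edge2 ends heF heG hew2 h1
      obtain ⟨z, hfz⟩ := Sym2.mem_iff_exists.1 hfw
      have hwz : w ≠ z := by
        intro h; exact hloop f (by rw [hfz, ← h]; exact Sym2.mk_isDiag_iff.2 rfl)
      have hfe : f ≠ e := fun h => hfF (h ▸ heF)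
      have hfnotera : f ∉ F.erase e := fun h => hfF (Finset.mem_of_mem_erase h)
      have hdegF' : jsDeg ends (insert f (F.erase e)) =
          jsDeg ends F - Pi.single u 1 + Pi.single z 1 := by
        rw [jsDeg_insert ends hfnotera hfz hwz, hdegera]; abel
      by_cases h2 : z ≠ u ∧ jsDeg ends F z < jsDeg ends G z
      · refine ⟨Pi.single z 1, ⟨z, Or.inl ⟨rfl, ?_⟩⟩, insert f (F.erase e), ?_⟩
        · simpa [Pi.single_eq_of_ne h2.1] using h2.2
        · rw [hdegF']; abel
      · set F' := insert f (F.erase e) with hF'def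
        have hGF' : G \ F' = (G \ F).erase f := by
          ext x
          simp only [hF'def, Finset.mem_sdiff, Finset.mem_erase, Finset.mem_insert]
          constructor
          · rintro ⟨hxG, hx⟩
            have hxe : x ≠ e := fun h => heG (h ▸ hxG)
            exact ⟨fun h => hx (Or.inl h), hxG, fun hxF => hx (Or.inr ⟨hxe, hxF⟩)⟩
          · rintro ⟨hxf, hxG, hxF⟩
            refine ⟨hxG, fun h => ?_⟩
            rcases h with h | h
            · exact hxf h
            · exact hxF h.2
        have hlt : (G \ F').card < n := by
          rw [hGF']
          calc ((G \ F).erase f).card < (G \ F).card :=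
                Finset.card_erase_lt_of_mem (Finset.mem_sdiff.2 ⟨hfG, hfF⟩)
            _ = n := hcard
        have hz : jsDeg ends G z < jsDeg ends F' z := by
          have := congrFun hdegF' z
          simp only [Pi.add_apply, Pi.sub_apply, Pi.single_eq_same] at this
          rw [this]
          by_cases hzu : z = u
          · subst hzu; simp only [Pi.single_eq_same]; omega
          · have h2' : ¬(z ≠ u ∧ jsDeg ends F z < jsDeg ends G z) := h2
            push_neg at h2'
            have hle := h2' hzu
            rw [Pi.single_eq_of_ne hzu]
            omega
        obtain ⟨t, ht, F'', hF''⟩ := ih _ hlt F' G rfl z hz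
        have hkey : jsDeg ends F' + -Pi.single z 1 = jsDeg ends F + -Pi.single u 1 := by
          rw [hdegF']; abel
        rw [hkey] at ht hF''
        exact ⟨t, ht, F'', hF''⟩

end Main

section Par
variable {V E : Type*} [DecidableEq V] [Fintype V] [DecidableEq E] [Fintype E]

lemma jsSum (ends : E → Sym2 V) (hloop : ∀ e, ¬ (ends e).IsDiag) (F : Finset E) :
    ∑ v, jsDeg ends F v = 2 * (F.card : ℤ) := by
  have key : ∑ v, (F.filter fun e => v ∈ ends e).card = 2 * F.card := by
    simp only [Finset.card_filter]
    rw [Finset.sum_comm]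
    have h2 : ∀ e ∈ F, (∑ v : V, if v ∈ ends e then 1 else 0) = 2 := by
      intro e _
      obtain ⟨a, b, hab⟩ : ∃ a b, ends e = s(a, b) :=
        Sym2.ind (fun a b => ⟨a, b, rfl⟩) (ends e)
      have hne : a ≠ b := fun h => hloop e (hab ▸ Sym2.mk_isDiag_iff.2 h)
      have hc : (∑ v : V, if v ∈ ends e then 1 else 0) =
          (Finset.univ.filter fun v => v ∈ ends e).card := (Finset.card_filter _ _).symm
      rw [hc]
      have hset : (Finset.univ.filter fun v => v ∈ ends e) = {a, b} := by
        ext v; simp [hab, Sym2.mem_iff]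
      rw [hset, Finset.card_insert_of_notMem (by simp [hne]), Finset.card_singleton]
    rw [Finset.sum_congr rfl h2, Finset.sum_const, smul_eq_mul, mul_comm]
  simp only [jsDeg]
  rw [← Nat.cast_sum, key]
  push_cast
  ring

end Par


/-- For a finite multigraph (possibly parallel edges, no loops), the set of
degree sequences of all edge subsets is a constant-parity jump system. -/
theorem stmt_8 {V E : Type*} [DecidableEq V] [Fintype V] [DecidableEq E] [Fintype E]
    (ends : E → Sym2 V) (hloop : ∀ e, ¬ (ends e).IsDiag) :
    IsJumpSystem {x : V → ℤ |
        ∃ F : Finset E, ∀ v, x v = ((F.filter fun e => v ∈ ends e).card : ℤ)} ∧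
      HasConstantParity {x : V → ℤ |
        ∃ F : Finset E, ∀ v, x v = ((F.filter fun e => v ∈ ends e).card : ℤ)} := by
  constructor
  · constructor
    · exact ⟨jsDeg ends ∅, ∅, fun v => rfl⟩
    · intro x hx y hy s hs _
      obtain ⟨F, hF⟩ := hx
      obtain ⟨G, hG⟩ := hy
      have hxF : x = jsDeg ends F := funext hF
      have hyG : y = jsDeg ends G := funext hG
      subst hxF; subst hyG
      obtain ⟨u, hcase⟩ := hs
      rcases hcase with ⟨rfl, hlt⟩ | ⟨rfl, hgt⟩
      · obtain ⟨t, ht, F', hF'⟩ := jsLemA ends hloop _ F G rfl u hlt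
        exact ⟨t, ht, F', fun v => (congrFun hF' v).symm⟩
      · obtain ⟨t, ht, F', hF'⟩ := jsLemB ends hloop _ F G rfl u hgt
        exact ⟨t, ht, F', fun v => (congrFun hF' v).symm⟩
  · intro x hx y hy
    obtain ⟨F, hF⟩ := hx
    obtain ⟨G, hG⟩ := hy
    have hxF : x = jsDeg ends F := funext hF
    have hyG : y = jsDeg ends G := funext hG
    subst hxF; subst hyG
    rw [jsSum ends hloop F, jsSum ends hloop G]
    exact ⟨(F.card : ℤ) - G.card, by ring⟩
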